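/- arXiv:2512.07635 — 3 statements merged into one kernel-verified Lean document; each statement's English description precedes it below -/
import Mathlib

section
/- Let X and Y be ℂ-vector spaces, f : X → Y a linear map, and A ⊆ X a nonempty disked set. Then f(A) ⊆ Y is a nonempty disked set, and the seminormed space Y_{f(A)} is isometrically isomorphic to the quotient seminormed space X_A / (ker f ∩ X_A). -/
open Filter Set Pointwise

structure VectorBornology (X : Type) [AddCommGroup X] [Module ℂ X] : Type where
  IsBounded : Set X → Prop
  isBounded_singleton : ∀ x : X, IsBounded {x}
  isBounded_union : ∀ {A B : Set X}, IsBounded A → IsBounded B → IsBounded (A ∪ B)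
  isBounded_subset : ∀ {A B : Set X}, A ⊆ B → IsBounded B → IsBounded A
  isBounded_add : ∀ {A B : Set X}, IsBounded A → IsBounded B → IsBounded (A + B)
  isBounded_smul : ∀ {S : Set ℂ} {A : Set X}, Bornology.IsBounded S → IsBounded A →
      IsBounded (Set.image2 (fun (c : ℂ) (x : X) => c • x) S A)

variable {X : Type} [AddCommGroup X] [Module ℂ X]

/-- A disked set: balanced and convex. -/
def IsDisked (A : Set X) : Prop := Balanced ℂ A ∧ Convex ℝ A

/-- The disked hull: the smallest balanced convex set containing `A`. -/
def diskedHull (A : Set X) : Set X := ⋂₀ {B : Set X | A ⊆ B ∧ IsDisked B}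

/-- Minkowski seminorm `p_B` associated with a (disked) set `B`. -/
noncomputable def gaugeB (B : Set X) (x : X) : ℝ := sInf {t : ℝ | 0 < t ∧ x ∈ t • B}

namespace VectorBornology

/-- A bornology is convex if it has a basis of convex sets. -/
def IsConvex (bv : VectorBornology X) : Prop :=
  ∀ A : Set X, bv.IsBounded A → ∃ B : Set X, bv.IsBounded B ∧ Convex ℝ B ∧ A ⊆ B

/-- Bornological convergence of a net. -/
def ConvergesTo (bv : VectorBornology X) {ι : Type} [Preorder ι] (x : ι → X) (a : X) : Prop :=
  ∃ B : Set X, bv.IsBounded B ∧ ∃ t : ι → ℝ,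
    Tendsto t atTop (nhds (0 : ℝ)) ∧ ∀ i, x i - a ∈ t i • B

/-- Bornological Cauchy net. -/
def CauchyNet (bv : VectorBornology X) {ι : Type} [Preorder ι] (x : ι → X) : Prop :=
  ∃ B : Set X, bv.IsBounded B ∧ ∃ t : ι × ι → ℝ,
    Tendsto t atTop (nhds (0 : ℝ)) ∧ ∀ p : ι × ι, x p.1 - x p.2 ∈ t p • B

/-- Bornologically closed set. -/
def IsBornClosed (bv : VectorBornology X) (A : Set X) : Prop :=
  ∀ (ι : Type) [Preorder ι] [Nonempty ι] [IsDirected ι (· ≤ ·)],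
    ∀ (x : ι → X) (a : X), (∀ i, x i ∈ A) → bv.ConvergesTo x a → a ∈ A

/-- Separated: `{0}` is the only bounded linear subspace. -/
def IsSeparated (bv : VectorBornology X) : Prop :=
  ∀ E : Submodule ℂ X, bv.IsBounded (E : Set X) → E = ⊥

/-- Bornologically complete: every bornological Cauchy net converges bornologically. -/
def IsBComplete (bv : VectorBornology X) : Prop :=
  ∀ (ι : Type) [Preorder ι] [Nonempty ι] [IsDirected ι (· ≤ ·)],
    ∀ x : ι → X, bv.CauchyNet x → ∃ a : X, bv.ConvergesTo x a

/-- `𝔅` is a basis of the bornology `bv`. -/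
def IsBasisOf (bv : VectorBornology X) (𝔅 : Set (Set X)) : Prop :=
  (∀ B ∈ 𝔅, bv.IsBounded B) ∧ ∀ A : Set X, bv.IsBounded A → ∃ B ∈ 𝔅, A ⊆ B

end VectorBornology

/-- Convergence of a net lying in `X_B = span ℂ B` with respect to the seminorm `p_B`. -/
def SeminormTendsto (B : Set X) {ι : Type} [Preorder ι] (x : ι → X) (a : X) : Prop :=
  (∀ i, x i ∈ Submodule.span ℂ B) ∧ a ∈ Submodule.span ℂ B ∧
    Tendsto (fun i => gaugeB B (x i - a)) atTop (nhds (0 : ℝ))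

/-- Cauchyness of a net lying in `X_B = span ℂ B` with respect to the seminorm `p_B`. -/
def SeminormCauchy (B : Set X) {ι : Type} [Preorder ι] (x : ι → X) : Prop :=
  (∀ i, x i ∈ Submodule.span ℂ B) ∧
    ∀ ε : ℝ, 0 < ε → ∃ i₀ : ι, ∀ i j : ι, i₀ ≤ i → i₀ ≤ j → gaugeB B (x i - x j) < ε

/-- `p_B` is a norm on `X_B`. -/
def IsNormOn (B : Set X) : Prop :=
  ∀ x : X, x ∈ Submodule.span ℂ B → gaugeB B x = 0 → x = 0

/-- `B` is completant: `X_B` with `p_B` is a Banach space. -/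
def Completant (B : Set X) : Prop :=
  IsNormOn B ∧ ∀ x : ℕ → X, SeminormCauchy B x → ∃ a : X, SeminormTendsto B x a
lemma isDisked_zero_mem {A : Set X} (hne : A.Nonempty) (hA : IsDisked A) : (0 : X) ∈ A := by
  obtain ⟨a, ha⟩ := hne
  have : (0 : ℂ) • a ∈ A := hA.1.smul_mem (by simp) ha
  simpa using this

lemma mem_smul_of_mem_span {A : Set X} (hne : A.Nonempty) (hA : IsDisked A)
    {x : X} (hx : x ∈ Submodule.span ℂ A) : ∃ t : ℝ, 0 < t ∧ x ∈ t • A := by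
  induction hx using Submodule.span_induction with
  | mem a ha => exact ⟨1, one_pos, by simpa using ha⟩
  | zero => exact ⟨1, one_pos, by simpa using isDisked_zero_mem hne hA⟩
  | add u v _ _ ihu ihv =>
      obtain ⟨s, hs, a, ha, rfl⟩ := ihu
      obtain ⟨t, ht, b, hb, rfl⟩ := ihv
      refine ⟨s + t, by linarith, ?_⟩
      have hst : (0:ℝ) < s + t := by linarith
      have hmem : (s / (s + t)) • a + (t / (s + t)) • b ∈ A :=
        hA.2 ha hb (by positivity) (by positivity) (by field_simp)
      refine ⟨_, hmem, ?_⟩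
      show (s + t) • ((s / (s + t)) • a + (t / (s + t)) • b) = s • a + t • b
      rw [smul_add, smul_smul, smul_smul]
      field_simp
  | smul c u _ ihu =>
      obtain ⟨t, ht, a, ha, rfl⟩ := ihu
      by_cases hc : c = 0
      · exact ⟨1, one_pos, by simpa [hc] using isDisked_zero_mem hne hA⟩
      · refine ⟨t * ‖c‖, mul_pos ht (norm_pos_iff.mpr hc), ?_⟩
        have hu : ((‖c‖ : ℂ)⁻¹ * c) • a ∈ A := by
          refine hA.1.smul_mem ?_ ha
          rw [norm_mul, norm_inv]
          simp [hc, norm_ne_zero_iff.mpr hc]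
        refine ⟨_, hu, ?_⟩
        show (t * ‖c‖) • ((‖c‖ : ℂ)⁻¹ * c) • a = c • t • a
        rw [smul_comm c t a, ← smul_assoc, ← smul_assoc]
        congr 1
        have hc' : (‖c‖ : ℂ) ≠ 0 := by
          simpa using norm_ne_zero_iff.mpr hc
        rw [Complex.real_smul, Complex.real_smul]
        have hc'' : (‖c‖ : ℂ) ≠ 0 := hc'
        push_cast
        field_simp [hc'']

lemma gaugeB_nonneg (B : Set X) (x : X) : 0 ≤ gaugeB B x :=
  Real.sInf_nonneg (fun _ ht => ht.1.le)

lemma gaugeB_bddBelow (B : Set X) (x : X) : BddBelow {t : ℝ | 0 < t ∧ x ∈ t • B} :=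
  ⟨0, fun _ ht => ht.1.le⟩

theorem stmt_4 {Y : Type} [AddCommGroup Y] [Module ℂ Y]
    (f : X →ₗ[ℂ] Y) (A : Set X) (hne : A.Nonempty) (hA : IsDisked A) :
    (f '' A).Nonempty ∧ IsDisked (f '' A) ∧
    Submodule.map f (Submodule.span ℂ A) = Submodule.span ℂ (f '' A) ∧
    ∀ x : X, x ∈ Submodule.span ℂ A →
      gaugeB (f '' A) (f x) =
        sInf {r : ℝ | ∃ y : X, y ∈ LinearMap.ker f ∧ y ∈ Submodule.span ℂ A ∧
          r = gaugeB A (x - y)} := by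
  have himg : IsDisked (f '' A) := by
    constructor
    · intro c hc z hz
      obtain ⟨w, hw, rfl⟩ := hz
      obtain ⟨a, ha, rfl⟩ := hw
      exact ⟨c • a, hA.1.smul_mem hc ha, by simp⟩
    · exact hA.2.linear_image (f.restrictScalars ℝ)
  refine ⟨hne.image f, himg, (Submodule.span_image f).symm, ?_⟩
  intro x hx
  set S : Set ℝ := {t : ℝ | 0 < t ∧ f x ∈ t • (f '' A)} with hS
  set T : Set ℝ := {r : ℝ | ∃ y : X, y ∈ LinearMap.ker f ∧ y ∈ Submodule.span ℂ A ∧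
      r = gaugeB A (x - y)} with hT
  have hTne : T.Nonempty := ⟨gaugeB A x, 0, by simp, Submodule.zero_mem _, by simp⟩
  have hTbdd : BddBelow T := ⟨0, by rintro r ⟨y, _, _, rfl⟩; exact gaugeB_nonneg A _⟩
  have hSbdd : BddBelow S := gaugeB_bddBelow _ _
  have hSne : S.Nonempty := by
    have : f x ∈ Submodule.span ℂ (f '' A) := by
      rw [Submodule.span_image]
      exact ⟨x, hx, rfl⟩
    obtain ⟨t, ht, hmem⟩ := mem_smul_of_mem_span (hne.image f) himg this
    exact ⟨t, ht, hmem⟩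
  apply le_antisymm
  · -- gaugeB (f''A) (f x) ≤ sInf T
    refine le_csInf hTne ?_
    rintro r ⟨y, hyker, hyspan, rfl⟩
    have hsub : {t : ℝ | 0 < t ∧ x - y ∈ t • A} ⊆ S := by
      rintro t ⟨ht, a, ha, hta⟩
      have hta' : t • a = x - y := hta
      refine ⟨ht, f a, ⟨a, ha, rfl⟩, ?_⟩
      show t • f a = f x
      rw [← f.map_smul_of_tower, hta', map_sub, LinearMap.mem_ker.mp hyker, sub_zero]
    have hne' : {t : ℝ | 0 < t ∧ x - y ∈ t • A}.Nonempty :=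
      mem_smul_of_mem_span hne hA (Submodule.sub_mem _ hx hyspan)
    exact csInf_le_csInf hSbdd hne' hsub
  · -- sInf T ≤ gaugeB (f''A) (f x)
    refine le_csInf hSne ?_
    rintro t ⟨ht, z, ⟨a, ha, rfl⟩, htz⟩
    have htz' : t • f a = f x := htz
    have hyker : x - t • a ∈ LinearMap.ker f := by
      rw [LinearMap.mem_ker, map_sub, f.map_smul_of_tower, htz', sub_self]
    have hyspan : x - t • a ∈ Submodule.span ℂ A :=
      Submodule.sub_mem _ hx (Submodule.smul_of_tower_mem _ t (Submodule.subset_span ha))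
    have hmemT : gaugeB A (x - (x - t • a)) ∈ T := ⟨x - t • a, hyker, hyspan, rfl⟩
    refine (csInf_le hTbdd hmemT).trans ?_
    have : x - (x - t • a) = t • a := by abel
    rw [this]
    exact csInf_le (gaugeB_bddBelow A _) ⟨ht, a, ha, rfl⟩
end

section
/- Let (X_λ, f_{λμ}) be an inductive system of convex bornological vector spaces with all transition maps f_{λμ} injective. (1) If each X_λ is separated, then the inductive limit colim X_λ with the inductive limit bornology is separated. (2) If each X_λ is complete and separated, then colim X_λ is complete and separated. -/
open Filter Set Pointwise

variable {X : Type} [AddCommGroup X] [Module ℂ X]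

section Aux
variable {Z W : Type} [AddCommGroup Z] [Module ℂ Z] [AddCommGroup W] [Module ℂ W]

lemma aux_image_smul (g : Z →ₗ[ℂ] W) (t : ℝ) (B : Set Z) :
    g '' (t • B) = t • (g '' B) := by
  ext y
  constructor
  · rintro ⟨z, ⟨u, hu, rfl⟩, rfl⟩
    exact ⟨g u, ⟨u, hu, rfl⟩, (map_smul (g.restrictScalars ℝ) t u).symm⟩
  · rintro ⟨w, ⟨u, hu, rfl⟩, rfl⟩
    exact ⟨t • u, ⟨u, hu, rfl⟩, map_smul (g.restrictScalars ℝ) t u⟩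

lemma aux_disked (bv : VectorBornology Z) (hcv : bv.IsConvex) (A : Set Z) (hA : bv.IsBounded A) :
    ∃ D : Set Z, D.Nonempty ∧ bv.IsBounded D ∧ IsDisked D ∧ A ⊆ D := by
  have hA0 : bv.IsBounded (A ∪ {0}) := bv.isBounded_union hA (bv.isBounded_singleton 0)
  set A1 := Set.image2 (fun (c : ℂ) (x : Z) => c • x) (Metric.closedBall 0 1) (A ∪ {0}) with hA1def
  have hA1 : bv.IsBounded A1 := bv.isBounded_smul Metric.isBounded_closedBall hA0
  have hsub : A ∪ {0} ⊆ A1 := fun x hx => ⟨1, by simp, x, hx, one_smul ℂ x⟩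
  have hbal : Balanced ℂ A1 := by
    intro a ha x hx
    obtain ⟨y, ⟨c, hc, u, hu, rfl⟩, rfl⟩ := hx
    refine ⟨a * c, ?_, u, hu, by simp [mul_smul]⟩
    simp only [Metric.mem_closedBall, dist_zero_right] at hc ⊢
    calc ‖a * c‖ = ‖a‖ * ‖c‖ := norm_mul a c
    _ ≤ 1 * 1 := mul_le_mul ha hc (norm_nonneg c) zero_le_one
    _ = 1 := one_mul 1
  obtain ⟨C', hC'b, hC'c, hC'sub⟩ := hcv A1 hA1
  refine ⟨convexHull ℝ A1, ⟨0, subset_convexHull ℝ A1 (hsub (Or.inr rfl))⟩,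
    bv.isBounded_subset (convexHull_min hC'sub hC'c) hC'b,
    ⟨fun a ha => by
        have e := LinearMap.image_convexHull ((DistribMulAction.toLinearMap ℂ Z a).restrictScalars ℝ) A1
        rw [← Set.image_smul]
        refine Eq.subset e |>.trans (convexHull_min ?_ (convex_convexHull ℝ A1))
        rintro _ ⟨u, hu, rfl⟩
        exact subset_convexHull ℝ A1 (hbal a ha ⟨u, hu, rfl⟩), convex_convexHull ℝ A1⟩,
    fun x hx => subset_convexHull ℝ A1 (hsub (Or.inl hx))⟩

end Aux
theorem stmt_13
    {Λ : Type} [Preorder Λ] [IsDirected Λ (· ≤ ·)] [Nonempty Λ]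
    (Xf : Λ → Type) [∀ l, AddCommGroup (Xf l)] [∀ l, Module ℂ (Xf l)]
    (b : ∀ l, VectorBornology (Xf l)) (hcv : ∀ l, (b l).IsConvex)
    (f : ∀ l m : Λ, l ≤ m → (Xf l →ₗ[ℂ] Xf m))
    (hf_id : ∀ (l : Λ) (h : l ≤ l) (x : Xf l), f l l h x = x)
    (hf_comp : ∀ (l m k : Λ) (h1 : l ≤ m) (h2 : m ≤ k) (x : Xf l),
      f m k h2 (f l m h1 x) = f l k (h1.trans h2) x)
    (hf_inj : ∀ (l m : Λ) (h : l ≤ m), Function.Injective (f l m h))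
    (hf_bdd : ∀ (l m : Λ) (h : l ≤ m) (A : Set (Xf l)),
      (b l).IsBounded A → (b m).IsBounded (f l m h '' A))
    (Y : Type) [AddCommGroup Y] [Module ℂ Y]
    (ι : ∀ l, Xf l →ₗ[ℂ] Y)
    (hι_comp : ∀ (l m : Λ) (h : l ≤ m) (x : Xf l), ι m (f l m h x) = ι l x)
    (hι_inj : ∀ l, Function.Injective (ι l))
    (hι_sur : ∀ y : Y, ∃ (l : Λ) (x : Xf l), ι l x = y)
    (bq : VectorBornology Y)
    (hbq : ∀ S : Set Y, bq.IsBounded S ↔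
      ∃ (l : Λ) (B : Set (Xf l)), B.Nonempty ∧ (b l).IsBounded B ∧ IsDisked B ∧
        S ⊆ ι l '' B) :
    ((∀ l, (b l).IsSeparated) → bq.IsSeparated) ∧
    ((∀ l, (b l).IsSeparated ∧ (b l).IsBComplete) → bq.IsSeparated ∧ bq.IsBComplete) := by
  have sep : (∀ l, (b l).IsSeparated) → bq.IsSeparated := by
    intro hs E hE
    obtain ⟨l, B, hBne, hBb, hBd, hEsub⟩ := (hbq _).1 hE
    have hF : (b l).IsBounded ((E.comap (ι l) : Submodule ℂ (Xf l)) : Set (Xf l)) := by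
      refine (b l).isBounded_subset (fun x hx => ?_) hBb
      obtain ⟨x', hx', hxx⟩ := hEsub hx
      rwa [← hι_inj l hxx]
    have hbot := hs l _ hF
    rw [eq_bot_iff]
    intro y hy
    obtain ⟨x', hx', hxx⟩ := hEsub hy
    have hmem : x' ∈ E.comap (ι l) := by
      simp only [Submodule.mem_comap, hxx]; exact hy
    rw [hbot, Submodule.mem_bot] at hmem
    rw [Submodule.mem_bot, ← hxx, hmem, map_zero]
  refine ⟨sep, fun h => ⟨sep (fun l => (h l).1), ?_⟩⟩
  intro ιt _ _ _ x hx
  obtain ⟨B, hB, t, ht, hxt⟩ := hx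
  obtain ⟨l, B₀, hB₀ne, hB₀b, hB₀d, hBsub⟩ := (hbq B).1 hB
  obtain ⟨i₀⟩ := ‹Nonempty ιt›
  obtain ⟨m, z, hz⟩ := hι_sur (x i₀)
  obtain ⟨k, hlk, hmk⟩ := exists_ge_ge l m
  have hy : ∀ i, ∃ yi : Xf l, ι l yi = x i - x i₀ ∧ yi ∈ t (i, i₀) • B₀ := by
    intro i
    have h2 : t (i, i₀) • B ⊆ ι l '' (t (i, i₀) • B₀) := by
      rw [aux_image_smul]; exact smul_set_mono hBsub
    obtain ⟨yi, hy1, hy2⟩ := h2 (hxt (i, i₀))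
    exact ⟨yi, hy2, hy1⟩
  choose y hy1 hy2 using hy
  set w : ιt → Xf k := fun i => f l k hlk (y i) + f m k hmk z with hw
  have hwx : ∀ i, ι k (w i) = x i := by
    intro i
    simp only [hw, map_add, hι_comp, hy1, hz]
    abel
  have hcauchy : (b k).CauchyNet w := by
    refine ⟨f l k hlk '' B₀, hf_bdd l k hlk B₀ hB₀b, t, ht, fun p => ?_⟩
    have hyd : y p.1 - y p.2 ∈ t p • B₀ := by
      have hmem : ι l (y p.1 - y p.2) ∈ ι l '' (t p • B₀) := by
        have heq : ι l (y p.1 - y p.2) = x p.1 - x p.2 := by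
          rw [map_sub, hy1, hy1]; abel
        rw [heq, aux_image_smul]
        exact smul_set_mono hBsub (hxt p)
      obtain ⟨u, hu, huv⟩ := hmem
      rwa [← hι_inj l huv]
    have heq : w p.1 - w p.2 = f l k hlk (y p.1 - y p.2) := by
      simp only [hw, map_sub]; abel
    rw [heq, ← aux_image_smul]
    exact Set.mem_image_of_mem _ hyd
  obtain ⟨a, C, hC, s, hs, hws⟩ := (h k).2 ιt w hcauchy
  obtain ⟨D, hDne, hDb, hDd, hCD⟩ := aux_disked (b k) (hcv k) C hC
  refine ⟨ι k a, ι k '' D, (hbq _).2 ⟨k, D, hDne, hDb, hDd, subset_rfl⟩, s, hs, fun i => ?_⟩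
  have heq : x i - ι k a = ι k (w i - a) := by rw [map_sub, hwx]
  rw [heq]
  have hmem : ι k (w i - a) ∈ ι k '' (s i • C) := Set.mem_image_of_mem _ (hws i)
  rw [aux_image_smul] at hmem
  exact smul_set_mono (Set.image_mono hCD) hmem
end

section
/- Let L be a Lie conformal algebra. Then Lie(L) := (ℂ[t,t⁻¹] ⊗ L)/Im(∂_t ⊗ id + id ⊗ T) with bracket [f⊗a, g⊗b] := Σ_{n≥0} (1/n!)(∂_t^n f)g ⊗ a_{(n)}b (well-defined on the quotient) is a Lie algebra; writing a_{[m]} for the class of t^m ⊗ a, the bracket satisfies [a_{[m]}, b_{[n]}] = Σ_{j≥0} C(m,j) (a_{(j)}b)_{[m+n−j]}. -/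
open Finset

/-- A Lie conformal algebra over `ℂ`, presented through the coefficients
`a_(n) b` of the λ-bracket `[a_λ b] = Σ_{n≥0} (λ^n/n!) a_(n) b`. -/
structure LieConformalAlgebra (L : Type) [AddCommGroup L] [Module ℂ L] where
  /-- the translation operator -/
  T : L →ₗ[ℂ] L
  /-- the `n`-th product `a_(n) b` -/
  prod : ℕ → L →ₗ[ℂ] L →ₗ[ℂ] L
  /-- local finiteness: `[a_λ b]` is polynomial in `λ` -/
  locfin : ∀ a b : L, ∃ N : ℕ, ∀ n ≥ N, prod n a b = 0
  /-- sesquilinearity `[Ta_λ b] = -λ [a_λ b]`, coefficient of `λ^0` -/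
  sesqui_zero : ∀ a b : L, prod 0 (T a) b = 0
  /-- sesquilinearity `[Ta_λ b] = -λ [a_λ b]`, higher coefficients -/
  sesqui : ∀ (n : ℕ) (a b : L), prod (n + 1) (T a) b = (-((n : ℂ) + 1)) • prod n a b
  /-- skew-symmetry `[b_λ a] = -[a_{-λ-T} b]`, in coefficients:
  `b_(n) a = -Σ_j ((-1)^{n+j}/j!) T^j (a_(n+j) b)` -/
  skew : ∀ (n : ℕ) (a b : L) (N : ℕ), (∀ j ≥ N, prod (n + j) a b = 0) →
      prod n b a =
        -∑ j ∈ Finset.range N,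
            (((-1 : ℂ) ^ (n + j)) * ((Nat.factorial j : ℂ))⁻¹) •
              ((⇑T)^[j] (prod (n + j) a b))
  /-- the Jacobi identity `[a_λ [b_μ c]] = [[a_λ b]_{λ+μ} c] + [b_μ [a_λ c]]`,
  in coefficients of `λ^n μ^m / (n! m!)` -/
  jacobi : ∀ (n m : ℕ) (a b c : L),
      prod n a (prod m b c) =
        (∑ i ∈ Finset.range (n + 1),
            (Nat.choose n i : ℂ) • prod (m + i) (prod (n - i) a b) c) +
          prod m b (prod n a c)

/-- A `2`-cocycle `ω_λ : L ⊗ L → ℂ[λ]` of a Lie conformal algebra, presented through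
the coefficients `ω_(n)(a,b)` of `ω_λ(a,b) = Σ_{n≥0} (λ^n/n!) ω_(n)(a,b)`. -/
structure LieConformalTwoCocycle {L : Type} [AddCommGroup L] [Module ℂ L]
    (P : LieConformalAlgebra L) where
  /-- the coefficient `ω_(n)` -/
  ω : ℕ → L →ₗ[ℂ] L →ₗ[ℂ] ℂ
  locfin : ∀ a b : L, ∃ N : ℕ, ∀ n ≥ N, ω n a b = 0
  /-- `ω_λ(Ta, b) = -λ ω_λ(a, b)` -/
  sesqui_zero : ∀ a b : L, ω 0 (P.T a) b = 0
  sesqui : ∀ (n : ℕ) (a b : L), ω (n + 1) (P.T a) b = (-((n : ℂ) + 1)) * ω n a b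
  /-- `ω_λ(b, a) = -ω_{-λ}(a, b)` -/
  skew : ∀ (n : ℕ) (a b : L), ω n b a = -(((-1 : ℂ) ^ n) * ω n a b)
  /-- `ω_λ(a, [b_μ c]) = ω_{λ+μ}([a_λ b], c) + ω_μ(b, [a_λ c])` in coefficients -/
  jacobi : ∀ (n m : ℕ) (a b c : L),
      ω n a (P.prod m b c) =
        (∑ i ∈ Finset.range (n + 1),
            (Nat.choose n i : ℂ) * ω (m + i) (P.prod (n - i) a b) c) +
          ω m b (P.prod n a c)
variable {L : Type} [AddCommGroup L] [Module ℂ L]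

/-- The image of `∂_t ⊗ id + id ⊗ T` inside `ℂ[t,t⁻¹] ⊗ L`, modelled as `ℤ →₀ L`
(the coefficient at `m` being that of `t^m`): it is spanned by the elements
`∂_t(t^m) ⊗ a + t^m ⊗ Ta = m t^{m-1} ⊗ a + t^m ⊗ Ta`. -/
noncomputable def lieRel (P : LieConformalAlgebra L) : Submodule ℂ (ℤ →₀ L) :=
  Submodule.span ℂ {x : ℤ →₀ L | ∃ (m : ℤ) (a : L),
    x = Finsupp.single (m - 1) ((m : ℂ) • a) + Finsupp.single m (P.T a)}

/-- `Lie(L) = (ℂ[t,t⁻¹] ⊗ L)/Im(∂_t ⊗ id + id ⊗ T)`. -/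
abbrev LieQuot (P : LieConformalAlgebra L) := (ℤ →₀ L) ⧸ lieRel P

/-- `a_{[m]}`, the class of `t^m ⊗ a`. -/
noncomputable def cls (P : LieConformalAlgebra L) (m : ℤ) (a : L) : LieQuot P :=
  Submodule.Quotient.mk (Finsupp.single m a)

/-- The binomial coefficient `C(m, j)` for `m ∈ ℤ`, `j ∈ ℕ`, as a complex number. -/
noncomputable def intChoose (m : ℤ) (j : ℕ) : ℂ :=
  (∏ i ∈ Finset.range j, ((m : ℂ) - (i : ℂ))) / (Nat.factorial j : ℂ)


namespace StmtAux

lemma fact_ne (j : ℕ) : (Nat.factorial j : ℂ) ≠ 0 := by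
  exact_mod_cast Nat.cast_ne_zero.mpr (Nat.factorial_ne_zero j)

lemma jadd_ne (j : ℕ) : ((j:ℂ) + 1) ≠ 0 := by
  have : ((j:ℂ) + 1) = ((j + 1 : ℕ) : ℂ) := by push_cast; ring
  rw [this]
  exact_mod_cast Nat.succ_ne_zero j

lemma ic_zero (m : ℤ) : intChoose m 0 = 1 := by simp [intChoose]

lemma ic_top_zero (j : ℕ) : intChoose 0 (j + 1) = 0 := by
  unfold intChoose
  rw [Finset.prod_eq_zero (Finset.mem_range.mpr (Nat.succ_pos j)) (by simp)]
  simp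

lemma ic_pascal (x : ℤ) (j : ℕ) :
    intChoose (x + 1) (j + 1) = intChoose x (j + 1) + intChoose x j := by
  unfold intChoose
  have h1 : ∏ i ∈ range (j+1), (((x+1 : ℤ) : ℂ) - i)
      = (∏ i ∈ range j, ((x:ℂ) - i)) * ((x:ℂ) + 1) := by
    have e1 := Finset.prod_range_succ' (fun k : ℕ => ((x+1 : ℤ) : ℂ) - k) j
    rw [e1]
    push_cast
    rw [show (∏ k ∈ range j, ((x:ℂ) + 1 - (↑k + 1))) = ∏ k ∈ range j, ((x:ℂ) - k) by
      apply Finset.prod_congr rfl; intro i _; ring]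
    ring
  rw [h1, Finset.prod_range_succ, Nat.factorial_succ]
  have := fact_ne j
  have hj1 := jadd_ne j
  field_simp
  push_cast
  ring

lemma ic_id1 (m : ℤ) (j : ℕ) :
    (m : ℂ) * intChoose (m - 1) j = ((m : ℂ) - j) * intChoose m j := by
  unfold intChoose
  have h1 : (m:ℂ) * ∏ i ∈ range j, (((m - 1 : ℤ) : ℂ) - i)
      = ((m:ℂ) - j) * ∏ i ∈ range j, ((m:ℂ) - i) := by
    have e1 := Finset.prod_range_succ' (fun k : ℕ => ((m:ℂ) - k)) j
    have e2 := Finset.prod_range_succ (fun k : ℕ => ((m:ℂ) - k)) j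
    have e3 : ∏ i ∈ range j, (((m - 1 : ℤ) : ℂ) - i) = ∏ k ∈ range j, ((m:ℂ) - (↑(k+1))) := by
      apply Finset.prod_congr rfl; intro i _; push_cast; ring
    rw [e3]
    have key := e1.symm.trans e2
    push_cast at key ⊢
    linear_combination key
  have := fact_ne j
  field_simp
  push_cast at h1 ⊢
  linear_combination h1

lemma ic_id2 (m : ℤ) (j : ℕ) :
    ((j:ℂ) + 1) * intChoose m (j + 1) = ((m : ℂ) - j) * intChoose m j := by
  unfold intChoose
  rw [Finset.prod_range_succ, Nat.factorial_succ]
  have := fact_ne j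
  have hj1 := jadd_ne j
  field_simp
  push_cast
  ring

lemma ic_trinom (x : ℤ) (t i : ℕ) :
    intChoose x (t + i) * (Nat.choose (t + i) i : ℂ)
      = intChoose x t * intChoose (x - t) i := by
  unfold intChoose
  have hp : ∏ s ∈ range (t + i), ((x:ℂ) - s)
      = (∏ s ∈ range t, ((x:ℂ) - s)) * ∏ s ∈ range i, (((x - t : ℤ):ℂ) - s) := by
    rw [Finset.prod_range_add]
    congr 1
    apply Finset.prod_congr rfl; intro s _; push_cast; ring
  have hc : (Nat.choose (t + i) i : ℂ) * (Nat.factorial i : ℂ) * (Nat.factorial t : ℂ)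
      = (Nat.factorial (t + i) : ℂ) := by
    have h := Nat.choose_mul_factorial_mul_factorial (Nat.le_add_left i t)
    have h2 : t + i - i = t := by omega
    rw [h2] at h
    exact_mod_cast congrArg (Nat.cast : ℕ → ℂ) h
  rw [hp]
  have h1 := fact_ne t
  have h2 := fact_ne i
  have h3 := fact_ne (t + i)
  field_simp
  push_cast at hp hc ⊢
  linear_combination (∏ s ∈ range t, ((x:ℂ) - s)) * (∏ s ∈ range i, ((x:ℂ) - (t:ℂ) - (s:ℂ))) * hc

lemma ic_vdm : ∀ (u : ℕ) (x y : ℤ),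
    ∑ i ∈ range (u + 1), intChoose x i * intChoose y (u - i) = intChoose (x + y) u := by
  intro u
  induction u with
  | zero => intro x y; simp [ic_zero]
  | succ u ih =>
    intro x y
    have expand : ∀ z : ℤ, ∑ i ∈ range (u + 1 + 1), intChoose z i * intChoose y (u + 1 - i)
        = (∑ k ∈ range (u + 1), intChoose z (k + 1) * intChoose y (u - k))
            + intChoose y (u + 1) := by
      intro z
      rw [Finset.sum_range_succ']
      congr 1
      · apply Finset.sum_congr rfl; intro k _
        congr 2
        omega
      · rw [ic_zero, one_mul, Nat.sub_zero]
    induction x using Int.induction_on with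
    | zero =>
      rw [Finset.sum_eq_single 0]
      · simp [ic_zero]
      · intro i _ hi
        obtain ⟨i', rfl⟩ := Nat.exists_eq_succ_of_ne_zero hi
        rw [ic_top_zero]; ring
      · intro h; simp at h
    | succ x hx =>
      calc ∑ i ∈ range (u + 1 + 1), intChoose (↑x + 1) i * intChoose y (u + 1 - i)
          = (∑ k ∈ range (u + 1), intChoose (↑x + 1) (k + 1) * intChoose y (u - k))
              + intChoose y (u + 1) := expand _
        _ = ((∑ k ∈ range (u + 1), intChoose ↑x (k + 1) * intChoose y (u - k))
              + intChoose y (u + 1))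
            + ∑ k ∈ range (u + 1), intChoose ↑x k * intChoose y (u - k) := by
            have hterm : ∀ k ∈ range (u + 1),
                intChoose (↑x + 1) (k + 1) * intChoose y (u - k)
                  = intChoose ↑x (k + 1) * intChoose y (u - k)
                    + intChoose ↑x k * intChoose y (u - k) := by
              intro k _; rw [ic_pascal]; ring
            rw [Finset.sum_congr rfl hterm, Finset.sum_add_distrib]; ring
        _ = intChoose (↑x + y) (u + 1) + intChoose (↑x + y) u := by
            rw [← expand ↑x, hx, ih ↑x y]
        _ = intChoose (↑x + 1 + y) (u + 1) := by
            rw [show (↑x : ℤ) + 1 + y = (↑x + y) + 1 from by ring, ic_pascal]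
    | pred x hx =>
      calc ∑ i ∈ range (u + 1 + 1), intChoose (-↑x - 1) i * intChoose y (u + 1 - i)
          = (∑ k ∈ range (u + 1), intChoose (-↑x - 1) (k + 1) * intChoose y (u - k))
              + intChoose y (u + 1) := expand _
        _ = ((∑ k ∈ range (u + 1), intChoose (-↑x) (k + 1) * intChoose y (u - k))
              + intChoose y (u + 1))
            - ∑ k ∈ range (u + 1), intChoose (-↑x - 1) k * intChoose y (u - k) := by
            have hterm : ∀ k ∈ range (u + 1),
                intChoose (-↑x - 1) (k + 1) * intChoose y (u - k)
                  = intChoose (-↑x) (k + 1) * intChoose y (u - k)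
                    - intChoose (-↑x - 1) k * intChoose y (u - k) := by
              intro k _
              have p := ic_pascal (-↑x - 1) k
              rw [show (-↑x - 1 : ℤ) + 1 = -↑x from by ring] at p
              have : intChoose (-↑x - 1 : ℤ) (k + 1)
                  = intChoose (-↑x : ℤ) (k + 1) - intChoose (-↑x - 1 : ℤ) k := by
                linear_combination -p
              rw [this]; ring
            rw [Finset.sum_congr rfl hterm, Finset.sum_sub_distrib]; ring
        _ = intChoose (-↑x + y) (u + 1) - intChoose (-↑x - 1 + y) u := by
            rw [← expand (-↑x), hx, ih (-↑x - 1) y]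
        _ = intChoose (-↑x - 1 + y) (u + 1) := by
            have p := ic_pascal (-↑x - 1 + y) u
            rw [show (-↑x - 1 + y : ℤ) + 1 = -↑x + y from by ring] at p
            linear_combination p

lemma ic_skew_vdm : ∀ (p : ℕ) (n m : ℤ),
    ∑ j ∈ range (p + 1), (-1 : ℂ) ^ j * intChoose n j * intChoose (m + n - j) (p - j)
      = intChoose m p := by
  intro p
  induction p with
  | zero => intro n m; simp [ic_zero]
  | succ q ihq =>
    intro n m
    have expand : ∀ (z W : ℤ),
        ∑ j ∈ range (q + 1 + 1), (-1 : ℂ) ^ j * intChoose z j * intChoose (W - ↑j) (q + 1 - j)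
          = (∑ k ∈ range (q + 1),
              (-1 : ℂ) ^ (k + 1) * intChoose z (k + 1) * intChoose (W - (↑k + 1)) (q - k))
            + intChoose W (q + 1) := by
      intro z W
      rw [Finset.sum_range_succ']
      congr 1
      · apply Finset.sum_congr rfl; intro k _
        have e1 : W - ((k + 1 : ℕ) : ℤ) = W - ((k : ℤ) + 1) := by push_cast; ring
        have e2 : q + 1 - (k + 1) = q - k := by omega
        rw [e1, e2]
      · simp [ic_zero]
    induction n using Int.induction_on generalizing m with
    | zero =>
      rw [Finset.sum_eq_single 0]
      · simp [ic_zero]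
      · intro i _ hi
        obtain ⟨i', rfl⟩ := Nat.exists_eq_succ_of_ne_zero hi
        rw [ic_top_zero]; ring
      · intro h; simp at h
    | succ n hn =>
      calc ∑ j ∈ range (q + 1 + 1),
            (-1 : ℂ) ^ j * intChoose (↑n + 1) j * intChoose (m + (↑n + 1) - ↑j) (q + 1 - j)
          = (∑ k ∈ range (q + 1), (-1 : ℂ) ^ (k + 1) * intChoose (↑n + 1) (k + 1)
                * intChoose (m + (↑n + 1) - (↑k + 1)) (q - k))
              + intChoose (m + (↑n + 1)) (q + 1) := expand _ _
        _ = ((∑ k ∈ range (q + 1), (-1 : ℂ) ^ (k + 1) * intChoose ↑n (k + 1)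
                * intChoose (m + 1 + ↑n - (↑k + 1)) (q - k))
              + intChoose (m + 1 + ↑n) (q + 1))
            - ∑ k ∈ range (q + 1),
                (-1 : ℂ) ^ k * intChoose ↑n k * intChoose (m + ↑n - ↑k) (q - k) := by
            have hterm : ∀ k ∈ range (q + 1),
                (-1 : ℂ) ^ (k + 1) * intChoose (↑n + 1) (k + 1)
                    * intChoose (m + (↑n + 1) - (↑k + 1)) (q - k)
                  = (-1 : ℂ) ^ (k + 1) * intChoose ↑n (k + 1)
                      * intChoose (m + 1 + ↑n - (↑k + 1)) (q - k)
                    - (-1 : ℂ) ^ k * intChoose ↑n k * intChoose (m + ↑n - ↑k) (q - k) := by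
              intro k _
              have eA : m + (↑n + 1) - ((k : ℤ) + 1) = m + 1 + ↑n - ((k : ℤ) + 1) := by ring
              have eB : m + 1 + ↑n - ((k : ℤ) + 1) = m + ↑n - (k : ℤ) := by ring
              rw [ic_pascal, eA, eB, pow_succ]
              ring
            rw [Finset.sum_congr rfl hterm, Finset.sum_sub_distrib]
            rw [show m + (↑n + 1) = m + 1 + ↑n from by ring]
            ring
        _ = intChoose (m + 1) (q + 1) - intChoose m q := by
            rw [← expand ↑n (m + 1 + ↑n)]
            have h1 := hn (m + 1)
            have h2 := ihq ↑n m
            rw [h1, h2]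
        _ = intChoose m (q + 1) := by linear_combination ic_pascal m q
    | pred n hn =>
      calc ∑ j ∈ range (q + 1 + 1),
            (-1 : ℂ) ^ j * intChoose (-↑n - 1) j * intChoose (m + (-↑n - 1) - ↑j) (q + 1 - j)
          = (∑ k ∈ range (q + 1), (-1 : ℂ) ^ (k + 1) * intChoose (-↑n - 1) (k + 1)
                * intChoose (m + (-↑n - 1) - (↑k + 1)) (q - k))
              + intChoose (m + (-↑n - 1)) (q + 1) := expand _ _
        _ = ((∑ k ∈ range (q + 1), (-1 : ℂ) ^ (k + 1) * intChoose (-↑n) (k + 1)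
                * intChoose (m - 1 + -↑n - (↑k + 1)) (q - k))
              + intChoose (m - 1 + -↑n) (q + 1))
            + ∑ k ∈ range (q + 1),
                (-1 : ℂ) ^ k * intChoose (-↑n - 1) k
                  * intChoose (m - 1 + (-↑n - 1) - ↑k) (q - k) := by
            have hterm : ∀ k ∈ range (q + 1),
                (-1 : ℂ) ^ (k + 1) * intChoose (-↑n - 1) (k + 1)
                    * intChoose (m + (-↑n - 1) - (↑k + 1)) (q - k)
                  = (-1 : ℂ) ^ (k + 1) * intChoose (-↑n) (k + 1)
                      * intChoose (m - 1 + -↑n - (↑k + 1)) (q - k)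
                    + (-1 : ℂ) ^ k * intChoose (-↑n - 1) k
                      * intChoose (m - 1 + (-↑n - 1) - ↑k) (q - k) := by
              intro k _
              have p := ic_pascal (-↑n - 1) k
              rw [show (-↑n - 1 : ℤ) + 1 = -↑n from by ring] at p
              have hsub : intChoose (-↑n - 1 : ℤ) (k + 1)
                  = intChoose (-↑n : ℤ) (k + 1) - intChoose (-↑n - 1 : ℤ) k := by
                linear_combination -p
              have eA : m + (-↑n - 1) - ((k : ℤ) + 1) = m - 1 + -↑n - ((k : ℤ) + 1) := by ring
              have eB : m - 1 + -↑n - ((k : ℤ) + 1) = m - 1 + (-↑n - 1) - (k : ℤ) := by ring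
              rw [hsub, eA, eB, pow_succ]
              ring
            rw [Finset.sum_congr rfl hterm, Finset.sum_add_distrib]
            rw [show m + (-↑n - 1) = m - 1 + -↑n from by ring]
            ring
        _ = intChoose (m - 1) (q + 1) + intChoose (m - 1) q := by
            rw [← expand (-↑n) (m - 1 + -↑n)]
            have h1 := hn (m - 1)
            have h2 := ihq (-↑n - 1) (m - 1)
            rw [h1, h2]
        _ = intChoose m (q + 1) := by
            have p := ic_pascal (m - 1) q
            rw [show (m - 1 : ℤ) + 1 = m from by ring] at p
            linear_combination -p

lemma sum_tri {M : Type*} [AddCommMonoid M] (N : ℕ) (H : ℕ → ℕ → M)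
    (hH : ∀ p i, N ≤ p + i → H p i = 0) :
    ∑ p ∈ range N, ∑ i ∈ range N, H p i
      = ∑ q ∈ range N, ∑ p ∈ range (q + 1), H p (q - p) := by
  classical
  rw [← Finset.sum_product']
  rw [Finset.sum_sigma']
  rw [show (∑ x ∈ (range N) ×ˢ (range N), H x.1 x.2)
      = ∑ x ∈ ((range N) ×ˢ (range N)).filter (fun x => x.1 + x.2 < N), H x.1 x.2 from
    (Finset.sum_filter_of_ne (by
      intro x hx hne
      by_contra hc
      exact hne (hH x.1 x.2 (by omega)))).symm]
  apply Finset.sum_bij' (i := fun x _ => (⟨x.1 + x.2, x.1⟩ : Σ _ : ℕ, ℕ))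
    (j := fun x _ => (x.2, x.1 - x.2))
  · intro a ha
    simp only [Finset.mem_filter, Finset.mem_product, Finset.mem_range] at ha
    simp only [Finset.mem_sigma, Finset.mem_range]
    omega
  · intro a ha
    simp only [Finset.mem_sigma, Finset.mem_range] at ha
    simp only [Finset.mem_filter, Finset.mem_product, Finset.mem_range]
    omega
  · intro a ha; simp
  · intro a ha
    simp only [Finset.mem_sigma, Finset.mem_range] at ha
    have h1 : a.snd + (a.fst - a.snd) = a.fst := by omega
    exact Sigma.ext h1 (by simp)
  · intro a ha
    simp only [Finset.mem_filter, Finset.mem_product, Finset.mem_range] at ha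
    have : a.1 + a.2 - a.1 = a.2 := by omega
    rw [this]


end StmtAux

-- begin construction
namespace StmtAux

/-- `cls` as a linear map in `a`. -/
noncomputable def clsL (P : LieConformalAlgebra L) (m : ℤ) : L →ₗ[ℂ] LieQuot P :=
  (lieRel P).mkQ.comp (Finsupp.lsingle m)

lemma clsL_apply (P : LieConformalAlgebra L) (m : ℤ) (a : L) :
    clsL P m a = cls P m a := rfl

lemma key_finsum {Q : Type*} [AddCommGroup Q] [Module ℂ Q] (g : ℕ → Q) (N : ℕ)
    (h : ∀ j ≥ N, g j = 0) : ∑ᶠ j, g j = ∑ j ∈ range N, g j := by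
  apply finsum_eq_sum_of_support_subset
  intro j hj
  simp only [Function.mem_support] at hj
  simp only [Finset.coe_range, Set.mem_Iio]
  by_contra hc
  exact hj (h j (by omega))

/-- the raw bracket value on pure "monomials" -/
noncomputable def brFun (P : LieConformalAlgebra L) (m n : ℤ) (a b : L) : LieQuot P :=
  ∑ᶠ j : ℕ, intChoose m j • cls P (m + n - (j : ℤ)) (P.prod j a b)

lemma brFun_eq (P : LieConformalAlgebra L) (m n : ℤ) (a b : L) (N : ℕ)
    (h : ∀ j ≥ N, P.prod j a b = 0) :
    brFun P m n a b = ∑ j ∈ range N, intChoose m j • cls P (m + n - (j : ℤ)) (P.prod j a b) := by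
  apply key_finsum
  intro j hj
  rw [h j hj]
  simp [cls]

noncomputable def br0 (P : LieConformalAlgebra L) (m n : ℤ) :
    L →ₗ[ℂ] L →ₗ[ℂ] LieQuot P := by
  refine LinearMap.mk₂ ℂ (brFun P m n) ?_ ?_ ?_ ?_
  · intro a a' b
    obtain ⟨N1, h1⟩ := P.locfin a b
    obtain ⟨N2, h2⟩ := P.locfin a' b
    have h3 : ∀ j ≥ max N1 N2, P.prod j (a + a') b = 0 := by
      intro j hj
      simp [map_add, h1 j (le_trans (le_max_left _ _) hj),
        h2 j (le_trans (le_max_right _ _) hj)]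
    rw [brFun_eq P m n _ _ _ h3,
      brFun_eq P m n a b _ (fun j hj => h1 j (le_trans (le_max_left _ _) hj)),
      brFun_eq P m n a' b _ (fun j hj => h2 j (le_trans (le_max_right _ _) hj)),
      ← Finset.sum_add_distrib]
    apply Finset.sum_congr rfl
    intro j _
    rw [← clsL_apply, ← clsL_apply, ← clsL_apply]
    simp [map_add, smul_add]
  · intro c a b
    obtain ⟨N1, h1⟩ := P.locfin a b
    have h3 : ∀ j ≥ N1, P.prod j (c • a) b = 0 := by
      intro j hj; simp [map_smul, h1 j hj]
    rw [brFun_eq P m n _ _ _ h3, brFun_eq P m n a b _ h1, Finset.smul_sum]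
    apply Finset.sum_congr rfl
    intro j _
    rw [← clsL_apply, ← clsL_apply]
    rw [map_smul, LinearMap.smul_apply, map_smul, smul_comm]
  · intro a b b'
    obtain ⟨N1, h1⟩ := P.locfin a b
    obtain ⟨N2, h2⟩ := P.locfin a b'
    have h3 : ∀ j ≥ max N1 N2, P.prod j a (b + b') = 0 := by
      intro j hj
      simp [map_add, h1 j (le_trans (le_max_left _ _) hj),
        h2 j (le_trans (le_max_right _ _) hj)]
    rw [brFun_eq P m n _ _ _ h3,
      brFun_eq P m n a b _ (fun j hj => h1 j (le_trans (le_max_left _ _) hj)),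
      brFun_eq P m n a b' _ (fun j hj => h2 j (le_trans (le_max_right _ _) hj)),
      ← Finset.sum_add_distrib]
    apply Finset.sum_congr rfl
    intro j _
    rw [← clsL_apply, ← clsL_apply, ← clsL_apply]
    simp [map_add, smul_add]
  · intro c a b
    obtain ⟨N1, h1⟩ := P.locfin a b
    have h3 : ∀ j ≥ N1, P.prod j a (c • b) = 0 := by
      intro j hj; simp [map_smul, h1 j hj]
    rw [brFun_eq P m n _ _ _ h3, brFun_eq P m n a b _ h1, Finset.smul_sum]
    apply Finset.sum_congr rfl
    intro j _
    rw [← clsL_apply, ← clsL_apply]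
    rw [map_smul, map_smul, smul_comm]

lemma br0_apply (P : LieConformalAlgebra L) (m n : ℤ) (a b : L) :
    br0 P m n a b = brFun P m n a b := rfl

/-- the bilinear bracket on `ℤ →₀ L` with values in the quotient -/
noncomputable def Bmap (P : LieConformalAlgebra L) :
    (ℤ →₀ L) →ₗ[ℂ] (ℤ →₀ L) →ₗ[ℂ] LieQuot P :=
  Finsupp.lsum ℂ (fun m =>
    ((Finsupp.lsum ℂ).toLinearMap.comp (LinearMap.pi (fun n => br0 P m n))))

lemma Bmap_single (P : LieConformalAlgebra L) (m n : ℤ) (a b : L) :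
    Bmap P (Finsupp.single m a) (Finsupp.single n b) = brFun P m n a b := by
  simp only [Bmap, Finsupp.lsum_single, LinearMap.coe_comp, LinearEquiv.coe_coe,
    Function.comp_apply, LinearMap.pi_apply]
  rfl

end StmtAux

namespace StmtAux
variable {P : LieConformalAlgebra L}


lemma cls_T (P : LieConformalAlgebra L) (k : ℤ) (x : L) :
    cls P k (P.T x) = -((k : ℂ) • cls P (k - 1) x) := by
  rw [eq_neg_iff_add_eq_zero]
  have hmem : (Finsupp.single (k - 1) ((k : ℂ) • x) + Finsupp.single k (P.T x)) ∈ lieRel P :=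
    Submodule.subset_span ⟨k, x, rfl⟩
  have : cls P k (P.T x) + (k : ℂ) • cls P (k - 1) x
      = Submodule.Quotient.mk (Finsupp.single (k - 1) ((k : ℂ) • x) + Finsupp.single k (P.T x)) := by
    rw [Submodule.Quotient.mk_add, ← Finsupp.smul_single, Submodule.Quotient.mk_smul]
    exact add_comm _ _
  rw [this, Submodule.Quotient.mk_eq_zero]
  exact hmem

lemma cls_T_iter (P : LieConformalAlgebra L) (k : ℤ) (i : ℕ) (x : L) :
    cls P k ((⇑P.T)^[i] x)
      = ((-1 : ℂ) ^ i * (Nat.factorial i : ℂ) * intChoose k i) • cls P (k - i) x := by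
  induction i generalizing k with
  | zero => simp [ic_zero]
  | succ i ih =>
    rw [Function.iterate_succ_apply', cls_T, ih (k - 1)]
    rw [show (k : ℤ) - 1 - (i : ℕ) = k - ((i + 1 : ℕ) : ℤ) from by push_cast; ring]
    rw [smul_smul, ← neg_smul]
    congr 1
    have h1 := ic_id1 k i
    have h2 := ic_id2 k i
    have key : ((i:ℂ) + 1) * intChoose k (i + 1) = (k : ℂ) * intChoose (k - 1) i := by
      rw [h2, ← h1]
    have hfac : ((Nat.factorial (i+1) : ℕ) : ℂ) = ((i:ℂ) + 1) * (Nat.factorial i : ℂ) := by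
      rw [Nat.factorial_succ]; push_cast; ring
    calc -((k:ℂ) * ((-1:ℂ) ^ i * (Nat.factorial i : ℂ) * intChoose (k - 1) i))
        = (-1:ℂ) ^ (i+1) * (Nat.factorial i : ℂ) * ((k:ℂ) * intChoose (k - 1) i) := by
          rw [pow_succ]; ring
      _ = (-1:ℂ) ^ (i+1) * (Nat.factorial i : ℂ) * (((i:ℂ) + 1) * intChoose k (i + 1)) := by
          rw [key]
      _ = (-1 : ℂ) ^ (i+1) * ((Nat.factorial (i+1) : ℕ) : ℂ) * intChoose k (i+1) := by
          rw [hfac]; ring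

/-- vanishing bound transfers to `T a` -/
lemma locfin_T {a b : L} (N : ℕ) (h : ∀ j ≥ N, P.prod j a b = 0) :
    ∀ j ≥ N + 1, P.prod j (P.T a) b = 0 := by
  intro j hj
  obtain ⟨j', rfl⟩ : ∃ j', j = j' + 1 := ⟨j - 1, by omega⟩
  rw [P.sesqui, h j' (by omega)]
  simp

/-- vanishing bound transfers to the flip -/
lemma locfin_flip {a b : L} (N : ℕ) (h : ∀ j ≥ N, P.prod j a b = 0) :
    ∀ j ≥ N, P.prod j b a = 0 := by
  intro j hj
  rw [P.skew j a b 0 (fun i _ => h (j + i) (by omega))]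
  simp

end StmtAux

namespace StmtAux


variable {P : LieConformalAlgebra L}

lemma cls_zero (k : ℤ) : cls P k (0 : L) = 0 := by
  rw [← clsL_apply, map_zero]

/-- vanishing of `Bmap` on the first-argument relations -/
lemma rel_left (P : LieConformalAlgebra L) (m n : ℤ) (a b : L) :
    Bmap P (Finsupp.single (m - 1) ((m : ℂ) • a) + Finsupp.single m (P.T a))
      (Finsupp.single n b) = 0 := by
  obtain ⟨N, h⟩ := P.locfin a b
  rw [map_add, LinearMap.add_apply, Bmap_single, Bmap_single]
  have hsm : ∀ j ≥ N, P.prod j ((m : ℂ) • a) b = 0 := by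
    intro j hj; rw [map_smul, LinearMap.smul_apply, h j hj, smul_zero]
  rw [brFun_eq P (m - 1) n _ b N hsm, brFun_eq P m n _ b (N + 1) (locfin_T N h)]
  rw [Finset.sum_range_succ']
  have e0 : intChoose m 0 • cls P (m + n - ((0 : ℕ) : ℤ)) (P.prod 0 (P.T a) b) = 0 := by
    rw [P.sesqui_zero, cls_zero, smul_zero]
  rw [e0, add_zero]
  have step1 : ∀ i ∈ range N,
      intChoose (m - 1) i • cls P (m - 1 + n - (i : ℤ)) (P.prod i ((m : ℂ) • a) b)
        = ((m : ℂ) * intChoose (m - 1) i) • cls P (m - 1 + n - (i : ℤ)) (P.prod i a b) := by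
    intro i _
    rw [map_smul, LinearMap.smul_apply, ← clsL_apply, map_smul, clsL_apply, smul_smul,
      mul_comm (intChoose (m - 1) i) ((m : ℂ))]
  have step2 : ∀ i ∈ range N,
      intChoose m (i + 1) • cls P (m + n - ((i + 1 : ℕ) : ℤ)) (P.prod (i + 1) (P.T a) b)
        = (-(((i : ℂ) + 1) * intChoose m (i + 1)))
            • cls P (m - 1 + n - (i : ℤ)) (P.prod i a b) := by
    intro i _
    rw [P.sesqui, ← clsL_apply, map_smul, clsL_apply, smul_smul,
      show m + n - ((i + 1 : ℕ) : ℤ) = m - 1 + n - (i : ℤ) from by push_cast; ring]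
    congr 1
    ring
  rw [Finset.sum_congr rfl step1, Finset.sum_congr rfl step2, ← Finset.sum_add_distrib]
  apply Finset.sum_eq_zero
  intro i _
  rw [← add_smul]
  have : (m : ℂ) * intChoose (m - 1) i + -(((i : ℂ) + 1) * intChoose m (i + 1)) = 0 := by
    linear_combination ic_id1 m i - ic_id2 m i
  rw [this, zero_smul]

/-- skew symmetry of `brFun` -/
lemma brFun_skew (P : LieConformalAlgebra L) (m n : ℤ) (a b : L) :
    brFun P n m b a = -brFun P m n a b := by
  obtain ⟨N, h⟩ := P.locfin a b
  rw [brFun_eq P n m b a N (locfin_flip N h), brFun_eq P m n a b N h]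
  have step1 : ∀ p ∈ range N,
      intChoose n p • cls P (n + m - (p : ℤ)) (P.prod p b a)
        = -∑ j ∈ range N, ((-1 : ℂ) ^ p * intChoose n p * intChoose (n + m - (p : ℤ)) j)
            • cls P (n + m - (p : ℤ) - (j : ℤ)) (P.prod (p + j) a b) := by
    intro p _
    rw [P.skew p a b N (fun j hj => h (p + j) (by omega))]
    rw [← clsL_apply, map_neg, map_sum, smul_neg, neg_inj, Finset.smul_sum]
    apply Finset.sum_congr rfl
    intro j _
    rw [map_smul, clsL_apply, cls_T_iter, smul_smul, smul_smul]
    congr 1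
    rw [pow_add]
    have hf := fact_ne j
    field_simp
    have hj : ((-1:ℂ))^j * ((-1:ℂ))^j = 1 := by
      rw [← pow_add, ← two_mul, pow_mul]; norm_num
    linear_combination (intChoose n p
      * intChoose (n + m - (p:ℤ)) j) * hj
  rw [Finset.sum_congr rfl step1, Finset.sum_neg_distrib, neg_inj]
  rw [sum_tri N (fun p j => ((-1 : ℂ) ^ p * intChoose n p * intChoose (n + m - (p : ℤ)) j)
        • cls P (n + m - (p : ℤ) - (j : ℤ)) (P.prod (p + j) a b))
      (by
        intro p i hpi
        rw [h (p + i) (by omega), cls_zero, smul_zero])]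
  apply Finset.sum_congr rfl
  intro q hq
  have e : ∀ p ∈ range (q + 1),
      ((-1 : ℂ) ^ p * intChoose n p * intChoose (n + m - (p : ℤ)) (q - p))
          • cls P (n + m - (p : ℤ) - ((q - p : ℕ) : ℤ)) (P.prod (p + (q - p)) a b)
        = ((-1 : ℂ) ^ p * intChoose n p * intChoose (m + n - (p : ℤ)) (q - p))
            • cls P (m + n - (q : ℤ)) (P.prod q a b) := by
    intro p hp
    have hpq : p ≤ q := by simp only [Finset.mem_range] at hp; omega
    rw [show p + (q - p) = q from by omega]
    rw [show n + m - (p : ℤ) - ((q - p : ℕ) : ℤ) = m + n - (q : ℤ) from by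
      push_cast [Nat.cast_sub hpq]; ring]
    rw [show n + m - (p : ℤ) = m + n - (p : ℤ) from by ring]
  rw [Finset.sum_congr rfl e, ← Finset.sum_smul, ic_skew_vdm q n m]

end StmtAux

namespace StmtAux
variable {P : LieConformalAlgebra L}

lemma Bmap_skew (P : LieConformalAlgebra L) (x y : ℤ →₀ L) :
    Bmap P y x = -Bmap P x y := by
  have key : (Bmap P) + (Bmap P).flip = 0 := by
    apply Finsupp.lhom_ext'
    intro m
    apply LinearMap.ext
    intro a
    apply Finsupp.lhom_ext'
    intro n
    apply LinearMap.ext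
    intro b
    simp only [LinearMap.add_apply, LinearMap.comp_apply, Finsupp.lsingle_apply,
      LinearMap.flip_apply, LinearMap.zero_apply]
    rw [Bmap_single, Bmap_single, brFun_skew P n m b a]
    simp
  have := LinearMap.congr_fun (LinearMap.congr_fun key y) x
  simp only [LinearMap.add_apply, LinearMap.flip_apply, LinearMap.zero_apply] at this
  linear_combination (norm := abel) this

end StmtAux

namespace StmtAux
variable {P : LieConformalAlgebra L}

lemma Bmap_rel_zero (P : LieConformalAlgebra L) : ∀ r ∈ lieRel P, Bmap P r = 0 := by
  have hle : lieRel P ≤ LinearMap.ker (Bmap P) := by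
    apply Submodule.span_le.mpr
    rintro x ⟨m, a, rfl⟩
    simp only [SetLike.mem_coe, LinearMap.mem_ker]
    apply Finsupp.lhom_ext'
    intro n
    apply LinearMap.ext
    intro b
    simp only [LinearMap.comp_apply, Finsupp.lsingle_apply, LinearMap.zero_apply,
      LinearMap.zero_comp]
    exact rel_left P m n a b
  intro r hr
  exact LinearMap.mem_ker.mp (hle hr)

lemma Bmap_rel_zero' (P : LieConformalAlgebra L) (x : ℤ →₀ L) :
    ∀ r ∈ lieRel P, Bmap P x r = 0 := by
  intro r hr
  have h0 : Bmap P r x = 0 := by rw [Bmap_rel_zero P r hr]; rfl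
  rw [Bmap_skew P r x, h0, neg_zero]

/-- the bracket with quotiented second argument -/
noncomputable def Bmap2 (P : LieConformalAlgebra L) :
    (ℤ →₀ L) →ₗ[ℂ] LieQuot P →ₗ[ℂ] LieQuot P where
  toFun x := Submodule.liftQ (lieRel P) (Bmap P x)
    (fun r hr => LinearMap.mem_ker.mpr (Bmap_rel_zero' P x r hr))
  map_add' x y := by
    apply LinearMap.ext
    intro q
    obtain ⟨z, rfl⟩ := Submodule.mkQ_surjective (lieRel P) q
    simp [Submodule.liftQ_apply]
  map_smul' c x := by
    apply LinearMap.ext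
    intro q
    obtain ⟨z, rfl⟩ := Submodule.mkQ_surjective (lieRel P) q
    simp [Submodule.liftQ_apply]

/-- the Lie bracket on the quotient -/
noncomputable def BrMap (P : LieConformalAlgebra L) :
    LieQuot P →ₗ[ℂ] LieQuot P →ₗ[ℂ] LieQuot P :=
  Submodule.liftQ (lieRel P) (Bmap2 P) (by
    intro r hr
    simp only [LinearMap.mem_ker]
    apply LinearMap.ext
    intro q
    obtain ⟨z, rfl⟩ := Submodule.mkQ_surjective (lieRel P) q
    simp only [Bmap2, LinearMap.coe_mk, AddHom.coe_mk, LinearMap.zero_apply]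
    rw [show ((lieRel P).mkQ z) = Submodule.Quotient.mk z from rfl, Submodule.liftQ_apply]
    rw [Bmap_rel_zero P r hr]
    rfl)

lemma BrMap_mk (P : LieConformalAlgebra L) (x y : ℤ →₀ L) :
    BrMap P (Submodule.Quotient.mk x) (Submodule.Quotient.mk y) = Bmap P x y := by
  rfl

lemma BrMap_cls (P : LieConformalAlgebra L) (m n : ℤ) (a b : L) :
    BrMap P (cls P m a) (cls P n b) = brFun P m n a b := by
  rw [cls, cls, BrMap_mk, Bmap_single]

lemma BrMap_skew (P : LieConformalAlgebra L) (x y : LieQuot P) :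
    BrMap P y x = -BrMap P x y := by
  obtain ⟨x, rfl⟩ := Submodule.mkQ_surjective (lieRel P) x
  obtain ⟨y, rfl⟩ := Submodule.mkQ_surjective (lieRel P) y
  rw [show ((lieRel P).mkQ x) = Submodule.Quotient.mk x from rfl,
    show ((lieRel P).mkQ y) = Submodule.Quotient.mk y from rfl,
    BrMap_mk, BrMap_mk, Bmap_skew]

lemma BrMap_alt (P : LieConformalAlgebra L) (x : LieQuot P) : BrMap P x x = 0 := by
  have h := BrMap_skew P x x
  have h2 : (2 : ℂ) • BrMap P x x = 0 := by
    rw [two_smul]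
    nth_rewrite 1 [h]
    abel
  rcases smul_eq_zero.mp h2 with hc | hv
  · norm_num at hc
  · exact hv

lemma span_cls_top (P : LieConformalAlgebra L) :
    Submodule.span ℂ {q : LieQuot P | ∃ m a, q = cls P m a} = ⊤ := by
  rw [eq_top_iff]
  rintro q -
  obtain ⟨x, rfl⟩ := Submodule.mkQ_surjective (lieRel P) q
  induction x using Finsupp.induction_linear with
  | zero => simp
  | add f g hf hg =>
    rw [map_add]
    exact Submodule.add_mem _ hf hg
  | single m a => exact Submodule.subset_span ⟨m, a, rfl⟩

end StmtAux

namespace StmtAux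
variable {P : LieConformalAlgebra L}


lemma sum_tri2 {M : Type*} [AddCommMonoid M] (N : ℕ) (G : ℕ → ℕ → M)
    (hG : ∀ t i, N ≤ t + i → G (t + i) i = 0) :
    ∑ r ∈ range N, ∑ i ∈ range (r + 1), G r i
      = ∑ t ∈ range N, ∑ i ∈ range N, G (t + i) i := by
  rw [sum_tri N (fun t i => G (t + i) i) hG]
  apply Finset.sum_congr rfl
  intro q hq
  have e : ∀ p ∈ range (q + 1), G (p + (q - p)) (q - p) = G q (q - p) := by
    intro p hp
    simp only [Finset.mem_range] at hp
    rw [show p + (q - p) = q from by omega]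
  rw [Finset.sum_congr rfl e]
  have := Finset.sum_range_reflect (fun i => G q i) (q + 1)
  simp only [Nat.add_sub_cancel] at this
  exact this.symm

lemma locfin_unif_right (P : LieConformalAlgebra L) (a : L) (g : ℕ → L) (M : ℕ)
    (hg : ∀ s ≥ M, g s = 0) : ∃ Nu, ∀ s j, j ≥ Nu → P.prod j a (g s) = 0 := by
  classical
  refine ⟨Finset.sup (range M) (fun s => Classical.choose (P.locfin a (g s))), ?_⟩
  intro s j hj
  by_cases hs : s < M
  · refine Classical.choose_spec (P.locfin a (g s)) j (le_trans ?_ hj)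
    exact Finset.le_sup (f := fun s => Classical.choose (P.locfin a (g s)))
      (Finset.mem_range.mpr hs)
  · rw [hg s (by omega), map_zero]

lemma locfin_unif_left (P : LieConformalAlgebra L) (c : L) (g : ℕ → L) (M : ℕ)
    (hg : ∀ s ≥ M, g s = 0) : ∃ Nu, ∀ s j, j ≥ Nu → P.prod j (g s) c = 0 := by
  classical
  refine ⟨Finset.sup (range M) (fun s => Classical.choose (P.locfin (g s) c)), ?_⟩
  intro s j hj
  by_cases hs : s < M
  · refine Classical.choose_spec (P.locfin (g s) c) j (le_trans ?_ hj)
    exact Finset.le_sup (f := fun s => Classical.choose (P.locfin (g s) c))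
      (Finset.mem_range.mpr hs)
  · rw [hg s (by omega), map_zero, LinearMap.zero_apply]

lemma jac_gen (P : LieConformalAlgebra L) (k m n : ℤ) (a b c : L) :
    BrMap P (cls P k a) (BrMap P (cls P m b) (cls P n c))
      = BrMap P (BrMap P (cls P k a) (cls P m b)) (cls P n c)
        + BrMap P (cls P m b) (BrMap P (cls P k a) (cls P n c)) := by
  obtain ⟨M1, h1⟩ := P.locfin a b
  obtain ⟨M2, h2⟩ := P.locfin b c
  obtain ⟨M3, h3⟩ := P.locfin a c
  obtain ⟨M4, h4⟩ := locfin_unif_right P a (fun s => P.prod s b c) M2 (fun s hs => h2 s hs)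
  obtain ⟨M5, h5⟩ := locfin_unif_right P b (fun s => P.prod s a c) M3 (fun s hs => h3 s hs)
  obtain ⟨M6, h6⟩ := locfin_unif_left P c (fun s => P.prod s a b) M1 (fun s hs => h1 s hs)
  set N := M1 + M2 + M3 + M4 + M5 + M6 + 1 with hN
  have hN1 : ∀ j ≥ N, P.prod j a b = 0 := fun j hj => h1 j (by omega)
  have hN2 : ∀ j ≥ N, P.prod j b c = 0 := fun j hj => h2 j (by omega)
  have hN3 : ∀ j ≥ N, P.prod j a c = 0 := fun j hj => h3 j (by omega)
  have hN4 : ∀ s j, j ≥ N → P.prod j a (P.prod s b c) = 0 := fun s j hj => h4 s j (by omega)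
  have hN5 : ∀ s j, j ≥ N → P.prod j b (P.prod s a c) = 0 := fun s j hj => h5 s j (by omega)
  have hN6 : ∀ t j, j ≥ N → P.prod j (P.prod t a b) c = 0 := fun t j hj => h6 t j (by omega)
  -- expand the left-hand side
  have L1 : BrMap P (cls P k a) (BrMap P (cls P m b) (cls P n c))
      = ∑ s ∈ range N, ∑ r ∈ range N, (intChoose m s * intChoose k r) •
          cls P (k + m + n - (s : ℤ) - (r : ℤ)) (P.prod r a (P.prod s b c)) := by
    rw [BrMap_cls, brFun_eq P m n b c N hN2, map_sum]
    apply Finset.sum_congr rfl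
    intro s _
    rw [map_smul, BrMap_cls, brFun_eq P k (m + n - (s:ℤ)) a _ N (fun j hj => hN4 s j hj),
      Finset.smul_sum]
    apply Finset.sum_congr rfl
    intro r _
    rw [smul_smul, show k + (m + n - (s:ℤ)) - (r:ℤ) = k + m + n - (s:ℤ) - (r:ℤ) from by ring]
  -- expand the right-hand sides
  have R2 : BrMap P (cls P m b) (BrMap P (cls P k a) (cls P n c))
      = ∑ r ∈ range N, ∑ s ∈ range N, (intChoose k r * intChoose m s) •
          cls P (k + m + n - (s : ℤ) - (r : ℤ)) (P.prod s b (P.prod r a c)) := by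
    rw [BrMap_cls, brFun_eq P k n a c N hN3, map_sum]
    apply Finset.sum_congr rfl
    intro r _
    rw [map_smul, BrMap_cls, brFun_eq P m (k + n - (r:ℤ)) b _ N (fun j hj => hN5 r j hj),
      Finset.smul_sum]
    apply Finset.sum_congr rfl
    intro s _
    rw [smul_smul, show m + (k + n - (r:ℤ)) - (s:ℤ) = k + m + n - (s:ℤ) - (r:ℤ) from by ring]
  have R1 : BrMap P (BrMap P (cls P k a) (cls P m b)) (cls P n c)
      = ∑ t ∈ range N, ∑ u ∈ range N, (intChoose k t * intChoose (k + m - (t:ℤ)) u) •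
          cls P (k + m + n - (t : ℤ) - (u : ℤ)) (P.prod u (P.prod t a b) c) := by
    rw [BrMap_cls, brFun_eq P k m a b N hN1, map_sum, LinearMap.sum_apply]
    apply Finset.sum_congr rfl
    intro t _
    rw [map_smul, LinearMap.smul_apply, BrMap_cls,
      brFun_eq P (k + m - (t:ℤ)) n _ c N (fun j hj => hN6 t j hj), Finset.smul_sum]
    apply Finset.sum_congr rfl
    intro u _
    rw [smul_smul, show k + m - (t:ℤ) + n - (u:ℤ) = k + m + n - (t:ℤ) - (u:ℤ) from by ring]
  -- apply the conformal Jacobi identity termwise and split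
  have L2 : ∑ s ∈ range N, ∑ r ∈ range N, (intChoose m s * intChoose k r) •
          cls P (k + m + n - (s : ℤ) - (r : ℤ)) (P.prod r a (P.prod s b c))
      = (∑ s ∈ range N, ∑ r ∈ range N, ∑ i ∈ range (r + 1),
          (intChoose m s * intChoose k r * (Nat.choose r i : ℂ)) •
            cls P (k + m + n - (s : ℤ) - (r : ℤ)) (P.prod (s + i) (P.prod (r - i) a b) c))
        + ∑ s ∈ range N, ∑ r ∈ range N, (intChoose m s * intChoose k r) •
            cls P (k + m + n - (s : ℤ) - (r : ℤ)) (P.prod s b (P.prod r a c)) := by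
    rw [← Finset.sum_add_distrib]
    apply Finset.sum_congr rfl
    intro s _
    rw [← Finset.sum_add_distrib]
    apply Finset.sum_congr rfl
    intro r _
    rw [P.jacobi r s a b c, ← clsL_apply, map_add, map_sum, smul_add]
    congr 1
    rw [Finset.smul_sum]
    apply Finset.sum_congr rfl
    intro i _
    rw [map_smul, clsL_apply, smul_smul, mul_assoc]
  -- the second pieces agree
  have hS2 : ∑ s ∈ range N, ∑ r ∈ range N, (intChoose m s * intChoose k r) •
          cls P (k + m + n - (s : ℤ) - (r : ℤ)) (P.prod s b (P.prod r a c))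
      = ∑ r ∈ range N, ∑ s ∈ range N, (intChoose k r * intChoose m s) •
          cls P (k + m + n - (s : ℤ) - (r : ℤ)) (P.prod s b (P.prod r a c)) := by
    rw [Finset.sum_comm]
    apply Finset.sum_congr rfl
    intro r _
    apply Finset.sum_congr rfl
    intro s _
    rw [mul_comm]
  -- the first piece equals the expanded R1
  have hS1 : ∑ s ∈ range N, ∑ r ∈ range N, ∑ i ∈ range (r + 1),
          (intChoose m s * intChoose k r * (Nat.choose r i : ℂ)) •
            cls P (k + m + n - (s : ℤ) - (r : ℤ)) (P.prod (s + i) (P.prod (r - i) a b) c)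
      = ∑ t ∈ range N, ∑ u ∈ range N, (intChoose k t * intChoose (k + m - (t:ℤ)) u) •
          cls P (k + m + n - (t : ℤ) - (u : ℤ)) (P.prod u (P.prod t a b) c) := by
    -- step 1: triangular reindex of (r, i) ↦ (t, i) with r = t + i
    have step1 : ∀ s ∈ range N,
        ∑ r ∈ range N, ∑ i ∈ range (r + 1),
            (intChoose m s * intChoose k r * (Nat.choose r i : ℂ)) •
              cls P (k + m + n - (s : ℤ) - (r : ℤ)) (P.prod (s + i) (P.prod (r - i) a b) c)
          = ∑ t ∈ range N, ∑ i ∈ range N,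
              (intChoose k t * (intChoose m s * intChoose (k - (t:ℤ)) i)) •
                cls P (k + m + n - (t : ℤ) - ((s + i : ℕ) : ℤ))
                  (P.prod (s + i) (P.prod t a b) c) := by
      intro s _
      rw [sum_tri2 N (fun r i => (intChoose m s * intChoose k r * (Nat.choose r i : ℂ)) •
            cls P (k + m + n - (s : ℤ) - (r : ℤ)) (P.prod (s + i) (P.prod (r - i) a b) c))
          (by
            intro t i hti
            simp only [Nat.add_sub_cancel]
            by_cases ht : t ≥ M1
            · rw [h1 t ht, map_zero, LinearMap.zero_apply, cls_zero, smul_zero]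
            · rw [h6 t (s + i) (by omega), cls_zero, smul_zero])]
      apply Finset.sum_congr rfl
      intro t _
      apply Finset.sum_congr rfl
      intro i _
      simp only [Nat.add_sub_cancel]
      rw [show k + m + n - (s : ℤ) - ((t + i : ℕ) : ℤ)
            = k + m + n - (t : ℤ) - ((s + i : ℕ) : ℤ) from by push_cast; ring]
      congr 1
      linear_combination (intChoose m s) * ic_trinom k t i
    rw [Finset.sum_congr rfl step1, Finset.sum_comm]
    -- step 2: triangular reindex of (s, i) ↦ u = s + i, then Vandermonde
    apply Finset.sum_congr rfl
    intro t _
    rw [sum_tri N (fun s i => (intChoose k t * (intChoose m s * intChoose (k - (t:ℤ)) i)) •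
          cls P (k + m + n - (t : ℤ) - ((s + i : ℕ) : ℤ)) (P.prod (s + i) (P.prod t a b) c))
        (by
          intro p i hpi
          rw [h6 t (p + i) (by omega), cls_zero, smul_zero])]
    apply Finset.sum_congr rfl
    intro u hu
    have e : ∀ p ∈ range (u + 1),
        (intChoose k t * (intChoose m p * intChoose (k - (t:ℤ)) (u - p))) •
            cls P (k + m + n - (t : ℤ) - ((p + (u - p) : ℕ) : ℤ))
              (P.prod (p + (u - p)) (P.prod t a b) c)
          = (intChoose k t * (intChoose m p * intChoose (k - (t:ℤ)) (u - p))) •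
              cls P (k + m + n - (t : ℤ) - (u : ℤ)) (P.prod u (P.prod t a b) c) := by
      intro p hp
      simp only [Finset.mem_range] at hp
      rw [show p + (u - p) = u from by omega]
    rw [Finset.sum_congr rfl e, ← Finset.sum_smul]
    congr 1
    rw [← Finset.mul_sum, ic_vdm u m (k - (t:ℤ)),
      show m + (k - (t:ℤ)) = k + m - (t:ℤ) from by ring]
  rw [L1, R2, R1, L2, hS2, hS1]

end StmtAux

namespace StmtAux
variable {P : LieConformalAlgebra L}

lemma ker_of_gen (P : LieConformalAlgebra L) (f : LieQuot P →ₗ[ℂ] LieQuot P)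
    (hf : ∀ (mm : ℤ) (bb : L), f (cls P mm bb) = 0) : f = 0 := by
  have hle : Submodule.span ℂ {q : LieQuot P | ∃ m a, q = cls P m a} ≤ LinearMap.ker f :=
    Submodule.span_le.mpr (by rintro q ⟨mm, bb, rfl⟩; exact LinearMap.mem_ker.mpr (hf mm bb))
  rw [span_cls_top] at hle
  exact LinearMap.ker_eq_top.mp (top_le_iff.mp hle)

lemma jac_all (P : LieConformalAlgebra L) (x y z : LieQuot P) :
    BrMap P x (BrMap P y z)
      = BrMap P (BrMap P x y) z + BrMap P y (BrMap P x z) := by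
  set Br := BrMap P with hBr
  let G : LieQuot P → LieQuot P → (LieQuot P →ₗ[ℂ] LieQuot P) := fun x y =>
    (Br x).comp (Br y) - Br (Br x y) - (Br y).comp (Br x)
  have hG : ∀ x y z, G x y z = Br x (Br y z) - Br (Br x y) z - Br y (Br x z) := by
    intro x y z
    simp [G, LinearMap.sub_apply, LinearMap.comp_apply]
  let Hm : LieQuot P → LieQuot P → (LieQuot P →ₗ[ℂ] LieQuot P) := fun x z =>
    (Br x).comp (Br.flip z) - (Br.flip z).comp (Br x) - Br.flip (Br x z)
  have hH : ∀ x z y, Hm x z y = Br x (Br y z) - Br (Br x y) z - Br y (Br x z) := by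
    intro x z y
    simp [Hm, LinearMap.sub_apply, LinearMap.comp_apply, LinearMap.flip_apply]
  let F : LieQuot P → LieQuot P → (LieQuot P →ₗ[ℂ] LieQuot P) := fun y z =>
    Br.flip (Br y z) - (Br.flip z).comp (Br.flip y) - (Br y).comp (Br.flip z)
  have hF : ∀ y z x, F y z x = Br x (Br y z) - Br (Br x y) z - Br y (Br x z) := by
    intro y z x
    simp [F, LinearMap.sub_apply, LinearMap.comp_apply, LinearMap.flip_apply]
  have key3 : ∀ (km : ℤ) (aa : L) (mm : ℤ) (bb : L), G (cls P km aa) (cls P mm bb) = 0 := by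
    intro km aa mm bb
    apply ker_of_gen
    intro nn cc
    rw [hG]
    rw [hBr, jac_gen P km mm nn aa bb cc]
    abel
  have key2 : ∀ (km : ℤ) (aa : L) (z : LieQuot P), Hm (cls P km aa) z = 0 := by
    intro km aa z
    apply ker_of_gen
    intro mm bb
    rw [hH, ← hG, key3 km aa mm bb]
    rfl
  have key1 : ∀ (y z : LieQuot P), F y z = 0 := by
    intro y z
    apply ker_of_gen
    intro km aa
    rw [hF, ← hH, key2 km aa z]
    rfl
  have h0 : F y z x = 0 := by rw [key1 y z]; rfl
  rw [hF] at h0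
  linear_combination (norm := abel) h0

end StmtAux


theorem stmt_18 (P : LieConformalAlgebra L) :
    ∃ Br : LieQuot P →ₗ[ℂ] LieQuot P →ₗ[ℂ] LieQuot P,
      (∀ x : LieQuot P, Br x x = 0) ∧
      (∀ x y z : LieQuot P, Br x (Br y z) = Br (Br x y) z + Br y (Br x z)) ∧
      (∀ (m n : ℤ) (a b : L) (N : ℕ), (∀ j ≥ N, P.prod j a b = 0) →
        Br (cls P m a) (cls P n b) =
          ∑ j ∈ Finset.range N, intChoose m j • cls P (m + n - (j : ℤ)) (P.prod j a b)) := by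
  refine ⟨StmtAux.BrMap P, StmtAux.BrMap_alt P, StmtAux.jac_all P, ?_⟩
  intro m n a b N h
  rw [StmtAux.BrMap_cls, StmtAux.brFun_eq P m n a b N h]
end
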